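/- The number of rooted G-configurations of size n (root allowed to be any vertex) equals \sum_{k=1}^{n} C(n,k) * k^{k-1} * (n-1)!/(k-1)!. -/

import Mathlib

set_option linter.unusedSectionVars false
set_option linter.unusedVariables false
set_option maxHeartbeats 1000000

/-- A rooted `G`-configuration of size `n`: a nonempty subset `V ⊆ [n]`, an undirected
tree on `V` with a designated root `r ∈ V` (represented as a graph on `Fin n` whose edges
lie inside `V`, acyclic and connected on `V`), and for each vertex outside `V` exactly one
arc to a vertex `≠ r`, no two arcs ending at the same vertex.  (The arc map is recorded as
a total function that is the identity on `V`.) -/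
structure GConfig (n : ℕ) where
  V : Finset (Fin n)
  root : Fin n
  hroot : root ∈ V
  tree : SimpleGraph (Fin n)
  hedge : ∀ v w, tree.Adj v w → v ∈ V ∧ w ∈ V
  hconn : ∀ v ∈ V, ∀ w ∈ V, tree.Reachable v w
  hacyc : tree.IsAcyclic
  arc : Fin n → Fin n
  harcV : ∀ v ∈ V, arc v = v
  harc : ∀ v, v ∉ V → arc v ≠ root
  hinj : ∀ v w, v ∉ V → w ∉ V → arc v = arc w → v = w



set_option linter.unusedSectionVars false
set_option linter.unusedVariables false

open Function

namespace Cayley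

/-- parent-function rooted trees -/
def PFun (α : Type*) := {q : α × (α → α) // q.2 q.1 = q.1 ∧ ∀ x, ∃ m, q.2^[m] x = q.1}

variable {α : Type*} [Fintype α] [LinearOrder α] [Nonempty α]

/-- the `j`-th smallest element of `S` -/
noncomputable def elt (S : Finset α) (j : ℕ) : α :=
  if h : j < S.card then (S.orderIsoOfFin rfl ⟨j, h⟩ : α) else Classical.arbitrary α

/-- index of `x` in `S` -/
noncomputable def idxN (S : Finset α) (x : α) : ℕ :=
  if hx : x ∈ S then ((S.orderIsoOfFin rfl).symm ⟨x, hx⟩ : Fin S.card) else 0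

lemma elt_mem {S : Finset α} {j : ℕ} (h : j < S.card) : elt S j ∈ S := by
  rw [elt, dif_pos h]; exact (S.orderIsoOfFin rfl ⟨j, h⟩).2

lemma idxN_lt {S : Finset α} {x : α} (hx : x ∈ S) : idxN S x < S.card := by
  rw [idxN, dif_pos hx]; exact ((S.orderIsoOfFin rfl).symm ⟨x, hx⟩).isLt

lemma elt_idxN {S : Finset α} {x : α} (hx : x ∈ S) : elt S (idxN S x) = x := by
  rw [elt, dif_pos (idxN_lt hx)]
  have : (⟨idxN S x, idxN_lt hx⟩ : Fin S.card) = (S.orderIsoOfFin rfl).symm ⟨x, hx⟩ := by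
    apply Fin.ext; simp [idxN, hx]
  rw [this]; simp

lemma idxN_elt {S : Finset α} {j : ℕ} (h : j < S.card) : idxN S (elt S j) = j := by
  rw [idxN, dif_pos (elt_mem h)]
  have : (⟨elt S j, elt_mem h⟩ : {x // x ∈ S}) = S.orderIsoOfFin rfl ⟨j, h⟩ := by
    apply Subtype.ext; simp only [elt]; rw [dif_pos h]
  rw [this]; simp

lemma elt_inj {S : Finset α} {j1 j2 : ℕ} (h1 : j1 < S.card) (h2 : j2 < S.card)
    (h : elt S j1 = elt S j2) : j1 = j2 := by
  rw [← idxN_elt h1, ← idxN_elt h2, h]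

/-- periodic points -/
def percyc (f : α → α) (x : α) : Prop := ∃ m, 0 < m ∧ f^[m] x = x

open Classical in
noncomputable def cycF (f : α → α) : Finset α := Finset.univ.filter (percyc f)

lemma mem_cycF {f : α → α} {x : α} : x ∈ cycF f ↔ percyc f x := by
  classical
  simp [cycF]

lemma percyc_apply {f : α → α} {x : α} (h : percyc f x) : percyc f (f x) := by
  obtain ⟨m, hm, hx⟩ := h
  exact ⟨m, hm, by rw [← iterate_succ_apply, iterate_succ_apply', hx]⟩

lemma percyc_iterate {f : α → α} {x : α} (h : percyc f x) (i : ℕ) : percyc f (f^[i] x) := by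
  induction i with
  | zero => exact h
  | succ n ih => rw [iterate_succ_apply']; exact percyc_apply ih

lemma percyc_mul {f : α → α} {x : α} {m : ℕ} (hm : f^[m] x = x) (k : ℕ) :
    f^[k * m] x = x := by
  induction k with
  | zero => simp
  | succ n ih => rw [Nat.succ_mul, iterate_add_apply, hm, ih]

lemma exists_iter_cyc (f : α → α) (x : α) : ∃ t, f^[t] x ∈ cycF f := by
  have : ¬ Function.Injective (fun i : Fin (Fintype.card α + 1) => f^[(i : ℕ)] x) := by
    intro hinj
    have := Fintype.card_le_of_injective _ hinj
    simp at this
  rw [Function.not_injective_iff] at this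
  obtain ⟨i, j, hij, hne⟩ := this
  have hij2 : f^[(i : ℕ)] x = f^[(j : ℕ)] x := hij
  have hne2 : (i : ℕ) ≠ (j : ℕ) := fun h => hne (Fin.ext h)
  rcases Nat.lt_or_ge (i : ℕ) (j : ℕ) with h | h
  · refine ⟨i, mem_cycF.2 ⟨(j : ℕ) - i, by omega, ?_⟩⟩
    rw [← iterate_add_apply, Nat.sub_add_cancel h.le, hij2]
  · have h' : (j : ℕ) < i := by omega
    refine ⟨j, mem_cycF.2 ⟨(i : ℕ) - j, by omega, ?_⟩⟩
    rw [← iterate_add_apply, Nat.sub_add_cancel h'.le, ← hij2]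

lemma cycF_nonempty (f : α → α) : (cycF f).Nonempty := by
  obtain ⟨t, ht⟩ := exists_iter_cyc f (Classical.arbitrary α)
  exact ⟨_, ht⟩

/-- the permutation induced by `f` on its periodic points -/
noncomputable def sigmaF (f : α → α) : {x // x ∈ cycF f} → {x // x ∈ cycF f} :=
  fun y => ⟨f y, mem_cycF.2 (percyc_apply (mem_cycF.1 y.2))⟩

lemma sigmaF_surj (f : α → α) : Function.Surjective (sigmaF f) := by
  rintro ⟨x, hx⟩
  obtain ⟨m, hm, hxm⟩ := mem_cycF.1 hx
  refine ⟨⟨f^[m-1] x, mem_cycF.2 (percyc_iterate (mem_cycF.1 hx) _)⟩, ?_⟩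
  apply Subtype.ext
  show f (f^[m-1] x) = x
  rw [← iterate_succ_apply' f (m-1) x]
  have : (m - 1).succ = m := by omega
  rw [this, hxm]

lemma sigmaF_bij (f : α → α) : Function.Bijective (sigmaF f) :=
  ⟨Finite.injective_iff_surjective.2 (sigmaF_surj f), sigmaF_surj f⟩

noncomputable def sigmaE (f : α → α) : {x // x ∈ cycF f} ≃ {x // x ∈ cycF f} :=
  Equiv.ofBijective _ (sigmaF_bij f)

noncomputable def invc (f : α → α) (x : α) : α :=
  if hx : x ∈ cycF f then ((sigmaE f).symm ⟨x, hx⟩ : {x // x ∈ cycF f}) else x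

lemma invc_mem {f : α → α} {x : α} (hx : x ∈ cycF f) : invc f x ∈ cycF f := by
  rw [invc, dif_pos hx]; exact ((sigmaE f).symm ⟨x, hx⟩).2

lemma f_invc {f : α → α} {x : α} (hx : x ∈ cycF f) : f (invc f x) = x := by
  rw [invc, dif_pos hx]
  have := (sigmaE f).apply_symm_apply ⟨x, hx⟩
  calc f ((sigmaE f).symm ⟨x, hx⟩ : {x // x ∈ cycF f})
      = (sigmaE f ((sigmaE f).symm ⟨x, hx⟩) : α) := rfl
    _ = x := by rw [this]

lemma invc_f {f : α → α} {x : α} (hx : x ∈ cycF f) : invc f (f x) = x := by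
  have hfx : f x ∈ cycF f := mem_cycF.2 (percyc_apply (mem_cycF.1 hx))
  rw [invc, dif_pos hfx]
  have : sigmaE f ⟨x, hx⟩ = ⟨f x, hfx⟩ := rfl
  rw [← this, Equiv.symm_apply_apply]

noncomputable def chainF (f : α → α) (j : ℕ) : α := f (elt (cycF f) j)

lemma chainF_mem {f : α → α} {j : ℕ} (h : j < (cycF f).card) : chainF f j ∈ cycF f :=
  mem_cycF.2 (percyc_apply (mem_cycF.1 (elt_mem h)))

lemma invc_chainF {f : α → α} {j : ℕ} (h : j < (cycF f).card) :
    invc f (chainF f j) = elt (cycF f) j := invc_f (elt_mem h)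

lemma chainF_inj {f : α → α} {j1 j2 : ℕ} (h1 : j1 < (cycF f).card) (h2 : j2 < (cycF f).card)
    (h : chainF f j1 = chainF f j2) : j1 = j2 := by
  have := invc_chainF h1
  rw [h, invc_chainF h2] at this
  exact elt_inj h1 h2 this.symm

lemma chainF_surj {f : α → α} {x : α} (hx : x ∈ cycF f) :
    chainF f (idxN (cycF f) (invc f x)) = x := by
  rw [chainF, elt_idxN (invc_mem hx), f_invc hx]

noncomputable def pF (f : α → α) (x : α) : α :=
  if hx : x ∈ cycF f then
    (if idxN (cycF f) (invc f x) + 1 < (cycF f).card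
      then chainF f (idxN (cycF f) (invc f x) + 1) else x)
  else f x

lemma pF_of_not_mem {f : α → α} {x : α} (hx : x ∉ cycF f) : pF f x = f x := by
  rw [pF, dif_neg hx]

lemma pF_chainF {f : α → α} {j : ℕ} (h : j + 1 < (cycF f).card) :
    pF f (chainF f j) = chainF f (j + 1) := by
  have hj : j < (cycF f).card := by omega
  rw [pF, dif_pos (chainF_mem hj), invc_chainF hj, idxN_elt hj, if_pos h]

lemma pF_chainF_last {f : α → α} {j : ℕ} (hj : j < (cycF f).card)
    (h : ¬ (j + 1 < (cycF f).card)) : pF f (chainF f j) = chainF f j := by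
  rw [pF, dif_pos (chainF_mem hj), invc_chainF hj, idxN_elt hj, if_neg h]

noncomputable def rootF (f : α → α) : α := chainF f ((cycF f).card - 1)

noncomputable def aF (f : α → α) : α := chainF f 0

lemma card_cycF_pos (f : α → α) : 0 < (cycF f).card := Finset.card_pos.2 (cycF_nonempty f)

lemma pF_rootF (f : α → α) : pF f (rootF f) = rootF f := by
  have := card_cycF_pos f
  exact pF_chainF_last (by omega) (by omega)

lemma chainF_reach (f : α → α) : ∀ k j, j < (cycF f).card → (cycF f).card - 1 - j = k →
    ∃ t, (pF f)^[t] (chainF f j) = rootF f := by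
  intro k
  induction k with
  | zero =>
    intro j hj hk
    have : j = (cycF f).card - 1 := by omega
    exact ⟨0, by rw [this]; rfl⟩
  | succ m ih =>
    intro j hj hk
    have h1 : j + 1 < (cycF f).card := by omega
    obtain ⟨t, ht⟩ := ih (j + 1) h1 (by omega)
    exact ⟨t + 1, by rw [iterate_succ_apply, pF_chainF h1, ht]⟩

lemma reach_cyc {f : α → α} {x : α} (hx : x ∈ cycF f) :
    ∃ t, (pF f)^[t] x = rootF f := by
  have := chainF_surj hx
  obtain ⟨t, ht⟩ := chainF_reach f ((cycF f).card - 1 - idxN (cycF f) (invc f x))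
    (idxN (cycF f) (invc f x)) (idxN_lt (invc_mem hx)) rfl
  exact ⟨t, by rw [this] at ht; exact ht⟩

lemma reachF_aux (f : α → α) : ∀ d x, f^[d] x ∈ cycF f → ∃ t, (pF f)^[t] x = rootF f := by
  intro d
  induction d with
  | zero => intro x hx; exact reach_cyc hx
  | succ m ih =>
    intro x hx
    by_cases h : x ∈ cycF f
    · exact reach_cyc h
    · obtain ⟨t, ht⟩ := ih (f x) (by rwa [← iterate_succ_apply])
      exact ⟨t + 1, by rw [iterate_succ_apply, pF_of_not_mem h]; exact ht⟩

lemma reachF (f : α → α) (x : α) : ∃ t, (pF f)^[t] x = rootF f := by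
  obtain ⟨d, hd⟩ := exists_iter_cyc f x
  exact reachF_aux f d x hd

/-- The forward Joyal map. -/
noncomputable def FJ (f : α → α) : PFun α × α :=
  (⟨(rootF f, pF f), pF_rootF f, reachF f⟩, aF f)

end Cayley
namespace Cayley

variable {α : Type*} [Fintype α] [LinearOrder α] [Nonempty α]

section Backward

variable (p : α → α) (r : α)

open Classical in
noncomputable def dp (hc : ∀ x, ∃ t, p^[t] x = r) (x : α) : ℕ := Nat.find (hc x)

variable (hr : p r = r) (hc : ∀ x, ∃ t, p^[t] x = r)

lemma dp_spec (x : α) : p^[dp p r hc x] x = r := by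
  classical exact Nat.find_spec (hc x)

lemma dp_le {t : ℕ} {x : α} (h : p^[t] x = r) : dp p r hc x ≤ t := by
  classical exact Nat.find_min' (hc x) h

lemma eq_root_of_dp_eq_zero {x : α} (h : dp p r hc x = 0) : x = r := by
  have := dp_spec p r hc x
  rwa [h] at this

lemma dp_p {x : α} (hx : x ≠ r) : dp p r hc (p x) + 1 = dp p r hc x := by
  have h0 : 0 < dp p r hc x := by
    rcases Nat.eq_zero_or_pos (dp p r hc x) with h | h
    · exact absurd (eq_root_of_dp_eq_zero p r hc h) hx
    · exact h
  have h1 : p^[dp p r hc x - 1] (p x) = r := by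
    rw [← iterate_succ_apply]
    have : (dp p r hc x - 1).succ = dp p r hc x := by omega
    rw [this]; exact dp_spec p r hc x
  have h2 : dp p r hc (p x) ≤ dp p r hc x - 1 := dp_le p r hc h1
  have h3 : p^[dp p r hc (p x) + 1] x = r := by
    rw [iterate_succ_apply]; exact dp_spec p r hc (p x)
  have h4 : dp p r hc x ≤ dp p r hc (p x) + 1 := dp_le p r hc h3
  omega

lemma dp_iter {x : α} : ∀ j, j ≤ dp p r hc x → dp p r hc (p^[j] x) = dp p r hc x - j := by
  intro j
  induction j with
  | zero => simp
  | succ i ih =>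
    intro hij
    have hi : i ≤ dp p r hc x := by omega
    have hy : p^[i] x ≠ r := by
      intro h
      have := dp_le p r hc h
      omega
    have key := dp_p p r hc hy
    have h5 : p (p^[i] x) = p^[i+1] x := (iterate_succ_apply' p i x).symm
    rw [h5, ih hi] at key
    omega

lemma iter_inj {x : α} {j1 j2 : ℕ} (h1 : j1 ≤ dp p r hc x) (h2 : j2 ≤ dp p r hc x)
    (h : p^[j1] x = p^[j2] x) : j1 = j2 := by
  have e1 := dp_iter p r hc j1 h1
  have e2 := dp_iter p r hc j2 h2
  rw [h] at e1
  omega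

noncomputable def TG (a : α) : Finset α :=
  (Finset.range (dp p r hc a + 1)).image (fun t => p^[t] a)

lemma mem_TG {a x : α} : x ∈ TG p r hc a ↔ ∃ j ≤ dp p r hc a, p^[j] a = x := by
  simp [TG, Nat.lt_succ_iff]

lemma card_TG (a : α) : (TG p r hc a).card = dp p r hc a + 1 := by
  rw [TG, Finset.card_image_of_injOn, Finset.card_range]
  intro i hi j hj h
  simp only [Finset.coe_range, Set.mem_Iio, Nat.lt_succ_iff] at hi hj
  exact iter_inj p r hc hi hj h

lemma root_mem_TG (a : α) : r ∈ TG p r hc a :=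
  (mem_TG p r hc).2 ⟨dp p r hc a, le_rfl, dp_spec p r hc a⟩

end Backward

/-- The backward Joyal map. -/
noncomputable def GJ' (p : α → α) (r : α) (hc : ∀ x, ∃ t, p^[t] x = r) (a : α) : α → α :=
  fun x => if x ∈ TG p r hc a then p^[idxN (TG p r hc a) x] a else p x

noncomputable def GJ (q : PFun α) (a : α) : α → α := GJ' q.1.2 q.1.1 q.2.2 a

end Cayley
namespace Cayley

variable {α : Type*} [Fintype α] [LinearOrder α] [Nonempty α]

lemma iter_aF (f : α → α) : ∀ j, j < (cycF f).card → (pF f)^[j] (aF f) = chainF f j := by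
  intro j
  induction j with
  | zero => intro _; rfl
  | succ i ih =>
    intro h
    have hi : i < (cycF f).card := by omega
    rw [iterate_succ_apply', ih hi, pF_chainF h]

lemma dp_aF (f : α → α) : dp (pF f) (rootF f) (reachF f) (aF f) = (cycF f).card - 1 := by
  have hm := card_cycF_pos f
  have h1 : (pF f)^[(cycF f).card - 1] (aF f) = rootF f := by
    rw [iter_aF f _ (by omega)]; rfl
  have h2 := dp_le (pF f) (rootF f) (reachF f) h1
  have h3 := dp_spec (pF f) (rootF f) (reachF f) (aF f)
  set d := dp (pF f) (rootF f) (reachF f) (aF f) with hd0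
  have hd : d < (cycF f).card := by omega
  rw [iter_aF f d hd] at h3
  rw [rootF] at h3
  have := chainF_inj hd (by omega) h3
  omega

lemma TG_FJ (f : α → α) : TG (pF f) (rootF f) (reachF f) (aF f) = cycF f := by
  ext x
  rw [mem_TG, dp_aF]
  constructor
  · rintro ⟨j, hj, hx⟩
    have hj' : j < (cycF f).card := by have := card_cycF_pos f; omega
    rw [iter_aF f j hj'] at hx
    rw [← hx]; exact chainF_mem hj'
  · intro hx
    refine ⟨idxN (cycF f) (invc f x), ?_, ?_⟩
    · have := idxN_lt (invc_mem hx); omega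
    · rw [iter_aF f _ (idxN_lt (invc_mem hx))]; exact chainF_surj hx

lemma GJ_FJ (f : α → α) : GJ (FJ f).1 (FJ f).2 = f := by
  funext x
  show GJ' (pF f) (rootF f) (reachF f) (aF f) x = f x
  rw [GJ']
  simp only [TG_FJ f]
  by_cases hx : x ∈ cycF f
  · rw [if_pos hx, iter_aF f _ (idxN_lt hx), chainF, elt_idxN hx]
  · rw [if_neg hx]; exact pF_of_not_mem hx

/-- elements of a finite set mapped bijectively to itself are periodic -/
lemma percyc_of_mapsTo {S : Finset α} {g : α → α} (hmap : ∀ x ∈ S, g x ∈ S)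
    (hinj : ∀ x ∈ S, ∀ y ∈ S, g x = g y → x = y) : ∀ x ∈ S, percyc g x := by
  have hiter : ∀ i, ∀ x ∈ S, g^[i] x ∈ S := by
    intro i
    induction i with
    | zero => intro x hx; exact hx
    | succ n ih => intro x hx; rw [iterate_succ_apply']; exact hmap _ (ih x hx)
  have hcancel : ∀ i, ∀ x ∈ S, ∀ y ∈ S, g^[i] x = g^[i] y → x = y := by
    intro i
    induction i with
    | zero => intro x _ y _ h; exact h
    | succ n ih =>
      intro x hx y hy h
      rw [iterate_succ_apply, iterate_succ_apply] at h
      exact hinj x hx y hy (ih (g x) (hmap x hx) (g y) (hmap y hy) h)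
  intro x hx
  have : ¬ Function.Injective (fun i : Fin (Fintype.card α + 1) => g^[(i : ℕ)] x) := by
    intro hinj2
    have := Fintype.card_le_of_injective _ hinj2
    simp at this
  rw [Function.not_injective_iff] at this
  obtain ⟨i, j, hij, hne⟩ := this
  have hij2 : g^[(i : ℕ)] x = g^[(j : ℕ)] x := hij
  have hne2 : (i : ℕ) ≠ (j : ℕ) := fun h => hne (Fin.ext h)
  rcases Nat.lt_or_ge (i : ℕ) (j : ℕ) with h | h
  · refine ⟨(j : ℕ) - i, by omega, hcancel (i : ℕ) _ (hiter _ _ hx) _ hx ?_⟩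
    rw [← iterate_add_apply, Nat.add_sub_cancel' h.le, ← hij2]
  · have h' : (j : ℕ) < i := by omega
    refine ⟨(i : ℕ) - j, by omega, hcancel (j : ℕ) _ (hiter _ _ hx) _ hx ?_⟩
    rw [← iterate_add_apply, Nat.add_sub_cancel' h'.le, hij2]

section RT2

variable (p : α → α) (r : α) (hr : p r = r) (hc : ∀ x, ∃ t, p^[t] x = r) (a : α)

lemma GJ'_of_mem {x : α} (hx : x ∈ TG p r hc a) :
    GJ' p r hc a x = p^[idxN (TG p r hc a) x] a := by rw [GJ', if_pos hx]

lemma GJ'_of_not_mem {x : α} (hx : x ∉ TG p r hc a) : GJ' p r hc a x = p x := by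
  rw [GJ', if_neg hx]

lemma GJ'_elt {j : ℕ} (hj : j < (TG p r hc a).card) :
    GJ' p r hc a (elt (TG p r hc a) j) = p^[j] a := by
  rw [GJ'_of_mem p r hc a (elt_mem hj), idxN_elt hj]

lemma GJ'_mapsTo {x : α} (hx : x ∈ TG p r hc a) : GJ' p r hc a x ∈ TG p r hc a := by
  rw [GJ'_of_mem p r hc a hx]
  refine (mem_TG p r hc).2 ⟨idxN (TG p r hc a) x, ?_, rfl⟩
  have := idxN_lt hx
  rw [card_TG] at this
  omega

lemma GJ'_injOn {x y : α} (hx : x ∈ TG p r hc a) (hy : y ∈ TG p r hc a)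
    (h : GJ' p r hc a x = GJ' p r hc a y) : x = y := by
  rw [GJ'_of_mem p r hc a hx, GJ'_of_mem p r hc a hy] at h
  have hx' := idxN_lt hx
  have hy' := idxN_lt hy
  rw [card_TG] at hx' hy'
  have := iter_inj p r hc (x := a) (by omega : idxN (TG p r hc a) x ≤ _) (by omega) h
  rw [← elt_idxN hx, ← elt_idxN hy, this]

include hr in
lemma cycF_GJ' : cycF (GJ' p r hc a) = TG p r hc a := by
  ext x
  constructor
  · intro hx
    obtain ⟨m, hm, hgm⟩ := mem_cycF.1 hx
    by_cases hs : ∃ s, (GJ' p r hc a)^[s] x ∈ TG p r hc a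
    · obtain ⟨s, hsx⟩ := hs
      have hiter : ∀ u, (GJ' p r hc a)^[u + s] x ∈ TG p r hc a := by
        intro u
        induction u with
        | zero => simpa using hsx
        | succ n ih =>
          have : n + 1 + s = (n + s) + 1 := by omega
          rw [this, iterate_succ_apply']
          exact GJ'_mapsTo p r hc a ih
      have hbig : (s + 1) * m = ((s + 1) * m - s) + s := by
        have : s + 1 ≤ (s + 1) * m := Nat.le_mul_of_pos_right _ hm
        omega
      have := percyc_mul hgm (s + 1)
      rw [hbig] at this
      rw [← this]
      exact hiter _
    · push_neg at hs
      have hgp : ∀ s, (GJ' p r hc a)^[s] x = p^[s] x := by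
        intro s
        induction s with
        | zero => rfl
        | succ n ih =>
          rw [iterate_succ_apply', iterate_succ_apply', ih]
          exact GJ'_of_not_mem p r hc a (ih ▸ hs n)
      exfalso
      have hK : (dp p r hc x + 1) * m = ((dp p r hc x + 1) * m - dp p r hc x) + dp p r hc x := by
        have : dp p r hc x + 1 ≤ (dp p r hc x + 1) * m := Nat.le_mul_of_pos_right _ hm
        omega
      have hxr : x = r := by
        conv_lhs => rw [← percyc_mul hgm (dp p r hc x + 1)]
        rw [hgp, hK, iterate_add_apply, dp_spec p r hc x, iterate_fixed hr]
      exact hs 0 (by simpa [hxr] using root_mem_TG p r hc a)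
  · intro hx
    exact mem_cycF.2 (percyc_of_mapsTo (fun y hy => GJ'_mapsTo p r hc a hy)
      (fun y hy z hz h => GJ'_injOn p r hc a hy hz h) x hx)

include hr in
lemma card_cycF_GJ' : (cycF (GJ' p r hc a)).card = dp p r hc a + 1 := by
  rw [cycF_GJ' p r hr hc a, card_TG]

include hr in
lemma chainF_GJ' {j : ℕ} (hj : j < dp p r hc a + 1) :
    chainF (GJ' p r hc a) j = p^[j] a := by
  rw [chainF, cycF_GJ' p r hr hc a, GJ'_elt p r hc a (by rwa [card_TG])]

include hr in
lemma rootF_GJ' : rootF (GJ' p r hc a) = r := by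
  rw [rootF, card_cycF_GJ' p r hr hc a]
  rw [chainF_GJ' p r hr hc a (by omega)]
  simpa using dp_spec p r hc a

include hr in
lemma aF_GJ' : aF (GJ' p r hc a) = a := by
  rw [aF, chainF_GJ' p r hr hc a (by omega)]
  rfl

include hr in
lemma pF_GJ' : pF (GJ' p r hc a) = p := by
  funext x
  by_cases hx : x ∈ cycF (GJ' p r hc a)
  · have hxT : x ∈ TG p r hc a := by rwa [cycF_GJ' p r hr hc a] at hx
    obtain ⟨j, hj, hjx⟩ := (mem_TG p r hc).1 hxT
    have hxc : x = chainF (GJ' p r hc a) j := by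
      rw [chainF_GJ' p r hr hc a (by omega), hjx]
    by_cases hj1 : j + 1 < (cycF (GJ' p r hc a)).card
    · rw [hxc, pF_chainF hj1, chainF_GJ' p r hr hc a (by rwa [card_cycF_GJ' p r hr hc a] at hj1),
        iterate_succ_apply', hjx, ← hxc]
    · have hjd : j = dp p r hc a := by
        rw [card_cycF_GJ' p r hr hc a] at hj1
        omega
      have hxr : x = r := by rw [← hjx, hjd]; exact dp_spec p r hc a
      rw [hxc, pF_chainF_last (by rw [card_cycF_GJ' p r hr hc a]; omega) hj1, ← hxc, hxr, hr]
  · rw [pF_of_not_mem hx]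
    rw [cycF_GJ' p r hr hc a] at hx
    exact GJ'_of_not_mem p r hc a hx

end RT2

lemma FJ_GJ (q : PFun α) (a : α) : FJ (GJ q a) = (q, a) := by
  obtain ⟨⟨r, p⟩, hr, hc⟩ := q
  have h1 : GJ ⟨(r, p), hr, hc⟩ a = GJ' p r hc a := rfl
  rw [h1]
  have h2 : rootF (GJ' p r hc a) = r := rootF_GJ' p r hr hc a
  have h3 : pF (GJ' p r hc a) = p := pF_GJ' p r hr hc a
  have h4 : aF (GJ' p r hc a) = a := aF_GJ' p r hr hc a
  rw [FJ]
  refine Prod.ext ?_ h4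
  apply Subtype.ext
  show (rootF (GJ' p r hc a), pF (GJ' p r hc a)) = (r, p)
  rw [h2, h3]

/-- The Joyal bijection. -/
noncomputable def joyalEquiv : (α → α) ≃ PFun α × α where
  toFun := FJ
  invFun := fun qa => GJ qa.1 qa.2
  left_inv := fun f => GJ_FJ f
  right_inv := fun qa => by rw [FJ_GJ qa.1 qa.2]

lemma card_PFun_linear :
    Nat.card (PFun α) = Fintype.card α ^ (Fintype.card α - 1) := by
  have h1 : Nat.card (α → α) = Nat.card (PFun α × α) := Nat.card_congr joyalEquiv
  rw [Nat.card_prod] at h1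
  have h2 : Nat.card (α → α) = Fintype.card α ^ Fintype.card α := by
    simp [Nat.card_eq_fintype_card, Fintype.card_fun]
  have h3 : Nat.card α = Fintype.card α := Nat.card_eq_fintype_card
  have hpos : 0 < Fintype.card α := Fintype.card_pos
  have h4 : Fintype.card α ^ Fintype.card α =
      Fintype.card α ^ (Fintype.card α - 1) * Fintype.card α := by
    obtain ⟨c, hc2⟩ : ∃ c, Fintype.card α = c + 1 := ⟨Fintype.card α - 1, by omega⟩
    rw [hc2]
    simp [pow_succ]
  rw [h2, h3, h4] at h1
  exact Nat.eq_of_mul_eq_mul_right hpos h1.symm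

end Cayley
namespace Cayley

lemma conj_iter {β γ : Type*} (b : β ≃ γ) (p : β → β) :
    ∀ (m : ℕ) (x : β), (⇑b ∘ p ∘ ⇑b.symm)^[m] (b x) = b (p^[m] x) := by
  intro m
  induction m with
  | zero => intro x; rfl
  | succ n ih =>
    intro x
    rw [Function.iterate_succ_apply', ih, Function.iterate_succ_apply']
    simp

def pfunMap {β γ : Type*} (b : β ≃ γ) (q : PFun β) : PFun γ :=
  ⟨(b q.1.1, ⇑b ∘ q.1.2 ∘ ⇑b.symm), by simp [q.2.1], by
    intro y
    obtain ⟨m, hm⟩ := q.2.2 (b.symm y)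
    refine ⟨m, ?_⟩
    have := conj_iter b q.1.2 m (b.symm y)
    rw [b.apply_symm_apply] at this
    rw [this, hm]⟩

def pfunCongr {β γ : Type*} (b : β ≃ γ) : PFun β ≃ PFun γ where
  toFun := pfunMap b
  invFun := pfunMap b.symm
  left_inv := by
    intro q
    apply Subtype.ext
    apply Prod.ext
    · simp [pfunMap]
    · funext x; simp [pfunMap]
  right_inv := by
    intro q
    apply Subtype.ext
    apply Prod.ext
    · simp [pfunMap]
    · funext x; simp [pfunMap]

theorem card_PFun {β : Type*} [Finite β] [Nonempty β] :
    Nat.card (PFun β) = Nat.card β ^ (Nat.card β - 1) := by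
  letI := Fintype.ofFinite β
  have e : β ≃ Fin (Fintype.card β) := Fintype.equivFin β
  haveI : Nonempty (Fin (Fintype.card β)) := ⟨e (Classical.arbitrary β)⟩
  have h := card_PFun_linear (α := Fin (Fintype.card β))
  rw [Nat.card_congr (pfunCongr e), h]
  simp [Nat.card_eq_fintype_card]

end Cayley
namespace Cayley

open SimpleGraph

section Graph

variable {n : ℕ} (V : Finset (Fin n)) (r : Fin n) (G : SimpleGraph (Fin n))

section Par

variable (hroot : r ∈ V)
  (hconn : ∀ v ∈ V, ∀ w ∈ V, G.Reachable v w)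

/-- canonical path from `v` to the root -/
noncomputable def cpath (v : Fin n) (hv : v ∈ V) : G.Walk v r :=
  ((hconn v hv r hroot).some.toPath : G.Path v r).1

lemma cpath_isPath (v : Fin n) (hv : v ∈ V) : (cpath V r G hroot hconn v hv).IsPath :=
  ((hconn v hv r hroot).some.toPath).2

variable (hacyc : G.IsAcyclic)

include hacyc in
lemma cpath_unique {v : Fin n} (hv : v ∈ V) (w : G.Walk v r) (hw : w.IsPath) :
    w = cpath V r G hroot hconn v hv := by
  have h := (isAcyclic_iff_path_unique.mp hacyc) ⟨w, hw⟩ ⟨_, cpath_isPath V r G hroot hconn v hv⟩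
  exact congrArg Subtype.val h

/-- the parent function of a rooted tree -/
noncomputable def par : Fin n → Fin n := fun v =>
  if h : v ∈ V then (if v = r then v else (cpath V r G hroot hconn v h).getVert 1) else v

lemma par_not_mem {v : Fin n} (hv : v ∉ V) : par V r G hroot hconn v = v := by
  rw [par, dif_neg hv]

lemma par_root : par V r G hroot hconn r = r := by
  rw [par, dif_pos hroot, if_pos rfl]

lemma par_eq_getVert {v : Fin n} (hv : v ∈ V) (hvr : v ≠ r) :
    par V r G hroot hconn v = (cpath V r G hroot hconn v hv).getVert 1 := by
  rw [par, dif_pos hv, if_neg hvr]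

lemma cpath_not_nil {v : Fin n} (hv : v ∈ V) (hvr : v ≠ r) :
    ¬ (cpath V r G hroot hconn v hv).Nil := SimpleGraph.Walk.not_nil_of_ne hvr

lemma par_adj {v : Fin n} (hv : v ∈ V) (hvr : v ≠ r) :
    G.Adj v (par V r G hroot hconn v) := by
  rw [par_eq_getVert V r G hroot hconn hv hvr]
  exact SimpleGraph.Walk.adj_snd (cpath_not_nil V r G hroot hconn hv hvr)

variable (hedge : ∀ v w, G.Adj v w → v ∈ V ∧ w ∈ V)

include hedge in
lemma par_mem {v : Fin n} (hv : v ∈ V) : par V r G hroot hconn v ∈ V := by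
  by_cases hvr : v = r
  · rw [hvr, par_root]; exact hroot
  · exact (hedge _ _ (par_adj V r G hroot hconn hv hvr)).2

include hedge hacyc in
lemma cpath_par {v : Fin n} (hv : v ∈ V) (hvr : v ≠ r) :
    ((cpath V r G hroot hconn v hv).tail.copy
        (par_eq_getVert V r G hroot hconn hv hvr).symm rfl)
      = cpath V r G hroot hconn _ (par_mem V r G hroot hconn hedge hv) := by
  apply cpath_unique V r G hroot hconn hacyc
  simp only [SimpleGraph.Walk.isPath_copy]
  exact (cpath_isPath V r G hroot hconn v hv).tail

include hedge hacyc in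
lemma cpath_par_length {v : Fin n} (hv : v ∈ V) (hvr : v ≠ r) :
    (cpath V r G hroot hconn _ (par_mem V r G hroot hconn hedge hv)).length + 1
      = (cpath V r G hroot hconn v hv).length := by
  rw [← cpath_par V r G hroot hconn hacyc hedge hv hvr]
  simp only [SimpleGraph.Walk.length_copy]
  exact SimpleGraph.Walk.length_tail_add_one (cpath_not_nil V r G hroot hconn hv hvr)

include hedge hacyc in
lemma par_reach : ∀ L v (hv : v ∈ V), (cpath V r G hroot hconn v hv).length ≤ L →
    ∃ m, (par V r G hroot hconn)^[m] v = r := by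
  intro L
  induction L with
  | zero =>
    intro v hv hL
    have : v = r := SimpleGraph.Walk.eq_of_length_eq_zero (Nat.le_zero.1 hL)
    exact ⟨0, this⟩
  | succ L ih =>
    intro v hv hL
    by_cases hvr : v = r
    · exact ⟨0, hvr⟩
    · have hlen := cpath_par_length V r G hroot hconn hacyc hedge hv hvr
      obtain ⟨m, hm⟩ := ih _ (par_mem V r G hroot hconn hedge hv) (by omega)
      exact ⟨m + 1, by rw [Function.iterate_succ_apply, hm]⟩

include hedge hacyc in
lemma par_reach' : ∀ v ∈ V, ∃ m, (par V r G hroot hconn)^[m] v = r := fun v hv =>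
  par_reach V r G hroot hconn hacyc hedge _ v hv le_rfl

end Par

end Graph

end Cayley
namespace Cayley

open SimpleGraph

section Dg

variable {n : ℕ} (V : Finset (Fin n)) (r : Fin n) (p : Fin n → Fin n)

/-- the graph of a parent function -/
def Dg : SimpleGraph (Fin n) where
  Adj v w := v ≠ w ∧ (w = p v ∨ v = p w)
  symm := ⟨by
    intro v w h
    exact ⟨Ne.symm h.1, h.2.symm⟩⟩
  loopless := ⟨fun v h => h.1 rfl⟩

lemma Dg_adj {v w : Fin n} : (Dg p).Adj v w ↔ v ≠ w ∧ (w = p v ∨ v = p w) := Iff.rfl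

variable (hrV : r ∈ V) (hfix : ∀ v, v ∉ V → p v = v) (hpr : p r = r)
  (hreach : ∀ v ∈ V, ∃ m, p^[m] v = r)

include hrV hfix hpr hreach in
lemma pmem {v : Fin n} (hv : v ∈ V) : p v ∈ V := by
  by_cases h : p v ∈ V
  · exact h
  · obtain ⟨m, hm⟩ := hreach v hv
    cases m with
    | zero =>
      simp only [Function.iterate_zero, id] at hm
      subst hm
      rw [hpr] at h
      exact absurd hrV h
    | succ m =>
      exfalso
      rw [Function.iterate_succ_apply, Function.iterate_fixed (hfix _ h)] at hm
      rw [hm] at h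
      exact h hrV

include hreach in
lemma p_ne_self {v : Fin n} (hv : v ∈ V) (hvr : v ≠ r) : p v ≠ v := by
  intro h
  obtain ⟨m, hm⟩ := hreach v hv
  rw [Function.iterate_fixed h] at hm
  exact hvr hm

include hrV hfix hpr hreach in
lemma Dg_edge {v w : Fin n} (h : (Dg p).Adj v w) : v ∈ V ∧ w ∈ V := by
  obtain ⟨hne, hor⟩ := h
  rcases hor with h1 | h1
  · have hv : v ∈ V := by
      by_contra hv
      exact hne ((h1.trans (hfix v hv)).symm)
    exact ⟨hv, h1 ▸ pmem V r p hrV hfix hpr hreach hv⟩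
  · have hw : w ∈ V := by
      by_contra hw
      exact hne (h1.trans (hfix w hw))
    exact ⟨h1 ▸ pmem V r p hrV hfix hpr hreach hw, hw⟩

include hreach in
lemma Dg_adj_par {v : Fin n} (hv : v ∈ V) (hvr : v ≠ r) : (Dg p).Adj v (p v) :=
  ⟨(p_ne_self V r p hreach hv hvr).symm, Or.inl rfl⟩

/-- auxiliary total parent function -/
def paux : Fin n → Fin n := fun v => if v ∈ V then p v else r

include hrV hfix hpr hreach in
lemma iter_mem {v : Fin n} (hv : v ∈ V) : ∀ t, p^[t] v ∈ V := by
  intro t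
  induction t with
  | zero => exact hv
  | succ m ih => rw [Function.iterate_succ_apply']; exact pmem V r p hrV hfix hpr hreach ih

include hrV hfix hpr hreach in
lemma paux_iter {v : Fin n} (hv : v ∈ V) : ∀ t, (paux V r p)^[t] v = p^[t] v := by
  intro t
  induction t with
  | zero => rfl
  | succ m ih =>
    rw [Function.iterate_succ_apply', Function.iterate_succ_apply', ih, paux,
      if_pos (iter_mem V r p hrV hfix hpr hreach hv m)]

include hrV hfix hpr hreach in
lemma paux_reach : ∀ x, ∃ t, (paux V r p)^[t] x = r := by
  intro x
  by_cases hx : x ∈ V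
  · obtain ⟨m, hm⟩ := hreach x hx
    exact ⟨m, by rw [paux_iter V r p hrV hfix hpr hreach hx, hm]⟩
  · exact ⟨1, by rw [Function.iterate_one, paux, if_neg hx]⟩

include hrV hpr in
lemma paux_root : paux V r p r = r := by rw [paux, if_pos hrV, hpr]

end Dg

end Cayley
namespace Cayley

open SimpleGraph

section Dg2

variable {n : ℕ} (V : Finset (Fin n)) (r : Fin n) (p : Fin n → Fin n)
variable (hrV : r ∈ V) (hfix : ∀ v, v ∉ V → p v = v) (hpr : p r = r)
  (hreach : ∀ v ∈ V, ∃ m, p^[m] v = r)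

/-- depth function -/
noncomputable def dN : Fin n → ℕ :=
  haveI : Nonempty (Fin n) := ⟨r⟩
  dp (paux V r p) r (paux_reach V r p hrV hfix hpr hreach)

include hrV hfix hpr hreach

lemma dN_spec (x : Fin n) :
    (paux V r p)^[dN V r p hrV hfix hpr hreach x] x = r := by
  haveI : Nonempty (Fin n) := ⟨r⟩
  exact dp_spec _ _ _ x

lemma dN_le {t : ℕ} {x : Fin n} (h : (paux V r p)^[t] x = r) :
    dN V r p hrV hfix hpr hreach x ≤ t := by
  haveI : Nonempty (Fin n) := ⟨r⟩
  exact dp_le _ _ _ h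

lemma dN_root : dN V r p hrV hfix hpr hreach r = 0 :=
  Nat.le_zero.1 (dN_le V r p hrV hfix hpr hreach (t := 0) (x := r) (by simp))

lemma dN_zero {x : Fin n} (h : dN V r p hrV hfix hpr hreach x = 0) : x = r := by
  have := dN_spec V r p hrV hfix hpr hreach x
  rwa [h] at this

lemma dN_p {x : Fin n} (hx : x ≠ r) :
    dN V r p hrV hfix hpr hreach (paux V r p x) + 1 = dN V r p hrV hfix hpr hreach x := by
  haveI : Nonempty (Fin n) := ⟨r⟩
  exact dp_p _ _ _ hx

lemma dN_pv {x : Fin n} (hxV : x ∈ V) (hx : x ≠ r) :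
    dN V r p hrV hfix hpr hreach (p x) + 1 = dN V r p hrV hfix hpr hreach x := by
  have := dN_p V r p hrV hfix hpr hreach hx
  rwa [paux, if_pos hxV] at this

lemma exW : ∀ k v, v ∈ V → dN V r p hrV hfix hpr hreach v = k →
    ∃ w : (Dg p).Walk v r, w.IsPath ∧ (v ≠ r → w.getVert 1 = p v) ∧
      (∀ u ∈ w.support, dN V r p hrV hfix hpr hreach u ≤ k) := by
  intro k
  induction k with
  | zero =>
    intro v hv hk
    have hvr := dN_zero V r p hrV hfix hpr hreach hk
    subst hvr
    refine ⟨Walk.nil, Walk.IsPath.nil, fun h => absurd rfl h, ?_⟩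
    intro u hu
    simp only [Walk.support_nil, List.mem_singleton] at hu
    subst hu
    rw [dN_root]
  | succ k ih =>
    intro v hv hk
    have hvr : v ≠ r := by
      intro h
      rw [h, dN_root V r p hrV hfix hpr hreach] at hk
      omega
    have hdp : dN V r p hrV hfix hpr hreach (p v) = k := by
      have := dN_pv V r p hrV hfix hpr hreach hv hvr
      omega
    obtain ⟨w', h1, h2, h3⟩ := ih (p v) (pmem V r p hrV hfix hpr hreach hv) hdp
    have hvs : v ∉ w'.support := by
      intro h
      have := h3 v h
      omega
    refine ⟨Walk.cons (Dg_adj_par V r p hreach hv hvr) w', h1.cons hvs, ?_, ?_⟩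
    · intro _
      rw [Walk.getVert_cons_succ, Walk.getVert_zero]
    · intro u hu
      rw [Walk.support_cons, List.mem_cons] at hu
      rcases hu with h | h
      · subst h; omega
      · have := h3 u h; omega

lemma Dg_conn : ∀ v ∈ V, ∀ w ∈ V, (Dg p).Reachable v w := by
  intro v hv w hw
  obtain ⟨wv, _, _, _⟩ := exW V r p hrV hfix hpr hreach _ v hv rfl
  obtain ⟨ww, _, _, _⟩ := exW V r p hrV hfix hpr hreach _ w hw rfl
  exact wv.reachable.trans ww.reachable.symm

lemma Dg_acyc : (Dg p).IsAcyclic := by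
  intro u c hc
  -- pick a vertex of maximal depth on the cycle
  set f := dN V r p hrV hfix hpr hreach with hf
  have hne : c.support ≠ [] := by
    cases c <;> simp
  obtain ⟨x, hxarg⟩ : ∃ x, x ∈ c.support.argmax f := by
    cases h : c.support.argmax f with
    | none => exact absurd (List.argmax_eq_none.1 h) hne
    | some x => exact ⟨x, rfl⟩
  have hx : x ∈ c.support := List.argmax_mem hxarg
  have hmax : ∀ a ∈ c.support, ¬ f x < f a := fun a ha => List.not_lt_of_mem_argmax ha hxarg
  -- rotate the cycle to start at x
  have hc' := hc.rotate hx
  set c' := c.rotate x hx with hc'def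
  -- membership transfer between supports
  have hmem : ∀ a, a ∈ c'.support → a ≠ x → a ∈ c.support := by
    intro a ha hax
    have h1 : a ∈ c'.support.tail := by
      have := c'.support_eq_cons
      rw [this] at ha
      rcases List.mem_cons.1 ha with h | h
      · exact absurd h hax
      · exact h
    have h2 := Walk.support_rotate c x hx
    have h3 : a ∈ c.support.tail := (h2.mem_iff).1 h1
    exact List.mem_of_mem_tail h3
  -- destructure the first edge
  have hnn : ¬ c'.Nil := hc'.not_nil
  obtain ⟨y, hadjxy, q, hq⟩ := Walk.not_nil_iff.1 hnn
  -- destructure the last edge via reverse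
  have hqnn : ¬ q.reverse.Nil := by
    rw [Walk.not_nil_iff_lt_length, Walk.length_reverse]
    have h3 := hc'.three_le_length
    rw [hq, Walk.length_cons] at h3
    omega
  obtain ⟨z, hadjxz, q2, hq2⟩ := Walk.not_nil_iff.1 hqnn
  -- y ≠ z
  have hz_in_q : s(x, z) ∈ q.edges := by
    have h5 : s(x, z) ∈ q.reverse.edges := by
      rw [hq2, Walk.edges_cons]
      exact List.mem_cons_self
    rwa [Walk.edges_reverse, List.mem_reverse] at h5
  have hyz : y ≠ z := by
    intro h
    have htrail := hc'.isTrail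
    rw [hq] at htrail
    have hnd := htrail.edges_nodup
    rw [Walk.edges_cons] at hnd
    rw [← h] at hz_in_q
    exact (List.nodup_cons.1 hnd).1 hz_in_q
  -- memberships
  have hyc' : y ∈ c'.support := by
    rw [hq, Walk.support_cons]
    exact List.mem_cons_of_mem _ q.start_mem_support
  have hzc' : z ∈ c'.support := by
    rw [hq, Walk.support_cons]
    refine List.mem_cons_of_mem _ ?_
    have h5 : z ∈ q.reverse.support := by
      rw [hq2, Walk.support_cons]
      exact List.mem_cons_of_mem _ q2.start_mem_support
    rwa [Walk.support_reverse, List.mem_reverse] at h5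
  have hxy : x ≠ y := hadjxy.1
  have hxz : x ≠ z := hadjxz.1
  have hyc : y ∈ c.support := hmem y hyc' (Ne.symm hxy)
  have hzc : z ∈ c.support := hmem z hzc' (Ne.symm hxz)
  -- each neighbor of x must be the parent of x
  have key : ∀ w : Fin n, (Dg p).Adj x w → w ∈ c.support → w = p x := by
    intro w hadj hwc
    rcases hadj.2 with h | h
    · exact h
    · exfalso
      have hwV : w ∈ V := (Dg_edge V r p hrV hfix hpr hreach hadj).2
      have hwr : w ≠ r := by
        intro h'
        rw [h', hpr] at h
        exact hadj.1 (h.trans h'.symm)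
      have h6 := dN_pv V r p hrV hfix hpr hreach hwV hwr
      rw [← h] at h6
      exact hmax w hwc (by rw [hf]; omega)
  exact hyz ((key y hadjxy hyc).trans (key z hadjxz hzc).symm)

end Dg2

end Cayley
namespace Cayley

open SimpleGraph

section RoundTrips

variable {n : ℕ} (V : Finset (Fin n)) (r : Fin n)

lemma Dg_par_eq (G : SimpleGraph (Fin n)) (hroot : r ∈ V)
    (hconn : ∀ v ∈ V, ∀ w ∈ V, G.Reachable v w) (hacyc : G.IsAcyclic)
    (hedge : ∀ v w, G.Adj v w → v ∈ V ∧ w ∈ V) :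
    Dg (par V r G hroot hconn) = G := by
  ext v w
  rw [Dg_adj]
  constructor
  · rintro ⟨hne, hor⟩
    rcases hor with h | h
    · have hvV : v ∈ V := by
        by_contra hvV
        rw [par_not_mem V r G hroot hconn hvV] at h
        exact hne h.symm
      have hvr : v ≠ r := by
        intro h'
        rw [h', par_root] at h
        exact hne (h'.trans h.symm)
      rw [h]
      exact par_adj V r G hroot hconn hvV hvr
    · have hwV : w ∈ V := by
        by_contra hwV
        rw [par_not_mem V r G hroot hconn hwV] at h
        exact hne h
      have hwr : w ≠ r := by
        intro h'
        rw [h', par_root] at h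
        exact hne (h.trans h'.symm)
      rw [h]
      exact (par_adj V r G hroot hconn hwV hwr).symm
  · intro hadj
    obtain ⟨hvV, hwV⟩ := hedge v w hadj
    have hne := G.ne_of_adj hadj
    refine ⟨hne, ?_⟩
    by_cases hvr : v = r
    · right
      subst hvr
      have hwr : w ≠ v := Ne.symm hne
      have hpath : (Walk.cons hadj.symm Walk.nil : G.Walk w v).IsPath :=
        Walk.IsPath.nil.cons (by simpa using hwr)
      have huniq := cpath_unique V v G hroot hconn hacyc hwV _ hpath
      rw [par_eq_getVert V v G hroot hconn hwV hwr, ← huniq,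
        Walk.getVert_cons_succ, Walk.getVert_zero]
    · by_cases hwr : w = r
      · left
        subst hwr
        have hpath : (Walk.cons hadj Walk.nil : G.Walk v w).IsPath :=
          Walk.IsPath.nil.cons (by simpa using hne)
        have huniq := cpath_unique V w G hroot hconn hacyc hvV _ hpath
        rw [par_eq_getVert V w G hroot hconn hvV hvr, ← huniq,
          Walk.getVert_cons_succ, Walk.getVert_zero]
      · by_cases hmem : v ∈ (cpath V r G hroot hconn w hwV).support
        · right
          have htake := (cpath_isPath V r G hroot hconn w hwV).takeUntil hmem
          have hsingle : (Walk.cons hadj.symm Walk.nil : G.Walk w v).IsPath :=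
            Walk.IsPath.nil.cons (by simpa using Ne.symm hne)
          have huniq : (Walk.cons hadj.symm Walk.nil : G.Walk w v)
              = (cpath V r G hroot hconn w hwV).takeUntil v hmem := by
            have h9 := (isAcyclic_iff_path_unique.mp hacyc)
              ⟨Walk.cons hadj.symm Walk.nil, hsingle⟩ ⟨_, htake⟩
            exact congrArg Subtype.val h9
          have hspec := Walk.take_spec (cpath V r G hroot hconn w hwV) hmem
          rw [par_eq_getVert V r G hroot hconn hwV hwr, ← hspec, ← huniq,
            Walk.cons_append, Walk.getVert_cons_succ, Walk.getVert_zero]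
        · left
          have hcons : (Walk.cons hadj (cpath V r G hroot hconn w hwV)).IsPath :=
            (cpath_isPath V r G hroot hconn w hwV).cons hmem
          have huniq := cpath_unique V r G hroot hconn hacyc hvV _ hcons
          rw [par_eq_getVert V r G hroot hconn hvV hvr, ← huniq,
            Walk.getVert_cons_succ, Walk.getVert_zero]

lemma par_Dg_eq (p : Fin n → Fin n) (hrV : r ∈ V) (hfix : ∀ v, v ∉ V → p v = v)
    (hpr : p r = r) (hreach : ∀ v ∈ V, ∃ m, p^[m] v = r) :
    par V r (Dg p) hrV (Dg_conn V r p hrV hfix hpr hreach) = p := by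
  funext v
  by_cases hv : v ∈ V
  · by_cases hvr : v = r
    · subst hvr
      rw [par_root, hpr]
    · obtain ⟨w, hpath, hgv, _⟩ := exW V r p hrV hfix hpr hreach _ v hv rfl
      have huniq := cpath_unique V r (Dg p) hrV (Dg_conn V r p hrV hfix hpr hreach)
        (Dg_acyc V r p hrV hfix hpr hreach) hv w hpath
      rw [par_eq_getVert V r (Dg p) hrV (Dg_conn V r p hrV hfix hpr hreach) hv hvr, ← huniq]
      exact hgv hvr
  · rw [par_not_mem V r (Dg p) hrV (Dg_conn V r p hrV hfix hpr hreach) hv, hfix v hv]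

end RoundTrips

/-- rooted trees on `V` -/
def RTp (n : ℕ) (V : Finset (Fin n)) :=
  {x : Fin n × SimpleGraph (Fin n) //
    x.1 ∈ V ∧ (∀ v w, x.2.Adj v w → v ∈ V ∧ w ∈ V) ∧
    (∀ v ∈ V, ∀ w ∈ V, x.2.Reachable v w) ∧ x.2.IsAcyclic}

/-- rooted parent functions on `V` -/
def PFp (n : ℕ) (V : Finset (Fin n)) :=
  {x : Fin n × (Fin n → Fin n) //
    x.1 ∈ V ∧ (∀ v, v ∉ V → x.2 v = v) ∧ x.2 x.1 = x.1 ∧ ∀ v ∈ V, ∃ m, x.2^[m] v = x.1}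

noncomputable def rtpEquiv (n : ℕ) (V : Finset (Fin n)) : RTp n V ≃ PFp n V where
  toFun := fun ⟨⟨r, G⟩, h1, h2, h3, h4⟩ =>
    ⟨(r, par V r G h1 h3), h1, fun v hv => par_not_mem V r G h1 h3 hv,
      par_root V r G h1 h3, par_reach' V r G h1 h3 h4 h2⟩
  invFun := fun ⟨⟨r, p⟩, h1, h2, h3, h4⟩ =>
    ⟨(r, Dg p), h1, fun v w h => Dg_edge V r p h1 h2 h3 h4 h,
      Dg_conn V r p h1 h2 h3 h4, Dg_acyc V r p h1 h2 h3 h4⟩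
  left_inv := fun ⟨⟨r, G⟩, h1, h2, h3, h4⟩ =>
    Subtype.ext (Prod.ext rfl (Dg_par_eq V r G h1 h3 h4 h2))
  right_inv := fun ⟨⟨r, p⟩, h1, h2, h3, h4⟩ =>
    Subtype.ext (Prod.ext rfl (par_Dg_eq V r p h1 h2 h3 h4))

section Restrict

variable {n : ℕ} (V : Finset (Fin n))

lemma restr_iter (p : Fin n → Fin n) (hm : ∀ v ∈ V, p v ∈ V) :
    ∀ (t : ℕ) (y : {y : Fin n // y ∈ V}),
      (((fun z : {y : Fin n // y ∈ V} => ⟨p z, hm z z.2⟩ :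
        {y : Fin n // y ∈ V} → {y : Fin n // y ∈ V})^[t] y : {y : Fin n // y ∈ V}) : Fin n)
        = p^[t] (y : Fin n) := by
  intro t
  induction t with
  | zero => intro y; rfl
  | succ m ih =>
    intro y
    rw [Function.iterate_succ_apply', Function.iterate_succ_apply', ← ih y]

lemma dite_iter (σ : {y : Fin n // y ∈ V} → {y : Fin n // y ∈ V}) :
    ∀ (t : ℕ) (y : {y : Fin n // y ∈ V}),
      (fun v : Fin n => if h : v ∈ V then (σ ⟨v, h⟩ : Fin n) else v)^[t] (y : Fin n)
        = ((σ^[t] y : {y : Fin n // y ∈ V}) : Fin n) := by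
  intro t
  induction t with
  | zero => intro y; rfl
  | succ m ih =>
    intro y
    rw [Function.iterate_succ_apply', Function.iterate_succ_apply', ih y]
    simp only [(σ^[m] y).2, dif_pos]

noncomputable def pfpEquiv : PFp n V ≃ PFun {y : Fin n // y ∈ V} where
  toFun := fun ⟨⟨r, p⟩, h1, h2, h3, h4⟩ =>
    ⟨(⟨r, h1⟩, fun y => ⟨p y, pmem V r p h1 h2 h3 h4 y.2⟩), Subtype.ext h3, by
      intro y
      obtain ⟨m, hm⟩ := h4 y y.2
      refine ⟨m, Subtype.ext ?_⟩
      rw [restr_iter V p (fun v hv => pmem V r p h1 h2 h3 h4 hv) m y]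
      exact hm⟩
  invFun := fun ⟨⟨ρ, σ⟩, k1, k2⟩ =>
    ⟨((ρ : Fin n), fun v => if h : v ∈ V then (σ ⟨v, h⟩ : Fin n) else v), ρ.2,
      fun v hv => dif_neg hv, by
        simp only [ρ.2, dif_pos, Subtype.coe_eta]
        exact congrArg Subtype.val k1, by
      intro v hv
      obtain ⟨m, hm⟩ := k2 ⟨v, hv⟩
      refine ⟨m, ?_⟩
      have := dite_iter V σ m ⟨v, hv⟩
      simp only at this
      rw [this, hm]⟩
  left_inv := fun ⟨⟨r, p⟩, h1, h2, h3, h4⟩ => by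
    apply Subtype.ext
    dsimp only
    rw [Prod.mk.injEq]
    refine ⟨rfl, ?_⟩
    funext v
    by_cases hv : v ∈ V
    · simp only [hv, dif_pos]
    · simp only [hv, dif_neg, not_false_iff]
      exact (h2 v hv).symm
  right_inv := fun ⟨⟨ρ, σ⟩, k1, k2⟩ => by
    apply Subtype.ext
    dsimp only
    rw [Prod.mk.injEq]
    constructor
    · exact Subtype.ext rfl
    · funext y
      apply Subtype.ext
      simp only [y.2, dif_pos, Subtype.coe_eta]

end Restrict

theorem card_RTp {n : ℕ} (V : Finset (Fin n)) (hV : V.Nonempty) :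
    Nat.card (RTp n V) = V.card ^ (V.card - 1) := by
  haveI : Nonempty {y : Fin n // y ∈ V} := ⟨⟨hV.choose, hV.choose_spec⟩⟩
  rw [Nat.card_congr ((rtpEquiv n V).trans (pfpEquiv V)), card_PFun]
  simp [Nat.card_eq_fintype_card]

theorem card_RTp_empty {n : ℕ} (V : Finset (Fin n)) (hV : ¬ V.Nonempty) :
    Nat.card (RTp n V) = 0 := by
  haveI : IsEmpty (RTp n V) := ⟨fun x => hV ⟨x.1.1, x.2.1⟩⟩
  exact Nat.card_of_isEmpty

end Cayley

namespace Cayley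

def ArcT (n : ℕ) (V : Finset (Fin n)) (r : Fin n) :=
  {a : Fin n → Fin n // (∀ v ∈ V, a v = v) ∧ (∀ v, v ∉ V → a v ≠ r) ∧
    ∀ v w, v ∉ V → w ∉ V → a v = a w → v = w}

instance (n : ℕ) (V : Finset (Fin n)) : Finite (RTp n V) := Subtype.finite

instance (n : ℕ) (V : Finset (Fin n)) (r : Fin n) : Finite (ArcT n V r) := Subtype.finite

def gconfigEquiv (n : ℕ) :
    GConfig n ≃ Σ V : Finset (Fin n), Σ rt : RTp n V, ArcT n V rt.1.1 where
  toFun c := ⟨c.V, ⟨(c.root, c.tree), c.hroot, c.hedge, c.hconn, c.hacyc⟩,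
    ⟨c.arc, c.harcV, c.harc, c.hinj⟩⟩
  invFun x :=
    { V := x.1, root := x.2.1.1.1, hroot := x.2.1.2.1, tree := x.2.1.1.2,
      hedge := x.2.1.2.2.1, hconn := x.2.1.2.2.2.1, hacyc := x.2.1.2.2.2.2,
      arc := x.2.2.1, harcV := x.2.2.2.1, harc := x.2.2.2.2.1, hinj := x.2.2.2.2.2 }
  left_inv c := rfl
  right_inv x := rfl

def arcEquiv (n : ℕ) (V : Finset (Fin n)) (r : Fin n) :
    ArcT n V r ≃ ({v : Fin n // v ∉ V} ↪ {y : Fin n // y ≠ r}) where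
  toFun a := ⟨fun v => ⟨a.1 v, a.2.2.1 v v.2⟩,
    fun v w h => Subtype.ext (a.2.2.2 v w v.2 w.2 (congrArg Subtype.val h))⟩
  invFun E := ⟨fun v => if h : v ∈ V then v else (E ⟨v, h⟩ : Fin n),
    fun v hv => dif_pos hv,
    fun v hv => by dsimp only; rw [dif_neg hv]; exact (E ⟨v, hv⟩).2,
    fun v w hv hw h => by
      dsimp only at h
      rw [dif_neg hv, dif_neg hw] at h
      exact congrArg Subtype.val (E.injective (Subtype.ext h))⟩
  left_inv a := by
    apply Subtype.ext
    funext v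
    dsimp only
    by_cases hv : v ∈ V
    · rw [dif_pos hv]; exact (a.2.1 v hv).symm
    · rw [dif_neg hv]; rfl
  right_inv E := by
    apply Function.Embedding.ext
    intro v
    apply Subtype.ext
    show (if h : (v : Fin n) ∈ V then (v : Fin n) else (E ⟨v, h⟩ : Fin n)) = (E v : Fin n)
    rw [dif_neg v.2]

lemma card_ArcT (n : ℕ) (V : Finset (Fin n)) (r : Fin n) :
    Nat.card (ArcT n V r) = (n - 1).descFactorial (n - V.card) := by
  classical
  rw [Nat.card_congr (arcEquiv n V r), Nat.card_eq_fintype_card,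
    Fintype.card_embedding_eq]
  congr 1
  · rw [Fintype.card_subtype_compl]
    simp [Fintype.card_subtype_eq]
  · rw [Fintype.card_subtype_compl]
    simp

lemma ncard_sigma {ι : Type*} [Fintype ι] (f : ι → Type*) [∀ i, Finite (f i)] :
    Nat.card (Sigma f) = ∑ i, Nat.card (f i) := by
  letI : ∀ i, Fintype (f i) := fun i => Fintype.ofFinite _
  simp only [Nat.card_eq_fintype_card]
  exact Fintype.card_sigma

end Cayley


/-- The number of rooted `G`-configurations of size `n` (root any vertex) equals
`∑_{k=1}^n C(n,k) · k^{k-1} · (n-1)!/(k-1)!`. -/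
theorem stmt15 (n : ℕ) (hn : 1 ≤ n) :
    Nat.card (GConfig n) =
      ∑ k ∈ Finset.Icc 1 n, n.choose k * k ^ (k - 1) *
        ((n - 1).factorial / (k - 1).factorial) := by
  classical
  rw [Nat.card_congr (Cayley.gconfigEquiv n), Cayley.ncard_sigma]
  have inner : ∀ V : Finset (Fin n),
      Nat.card (Σ rt : Cayley.RTp n V, Cayley.ArcT n V rt.1.1)
        = (if V.card ≠ 0 then V.card ^ (V.card - 1) else 0)
            * (n - 1).descFactorial (n - V.card) := by
    intro V
    letI : Fintype (Cayley.RTp n V) := Fintype.ofFinite _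
    rw [Cayley.ncard_sigma,
      Finset.sum_congr rfl (fun rt _ => Cayley.card_ArcT n V rt.1.1),
      Finset.sum_const, Finset.card_univ, smul_eq_mul, ← Nat.card_eq_fintype_card]
    by_cases h : V.Nonempty
    · rw [Cayley.card_RTp V h, if_pos (Nat.pos_iff_ne_zero.mp h.card_pos)]
    · rw [Cayley.card_RTp_empty V h, if_neg]
      rw [Finset.not_nonempty_iff_eq_empty.1 h]
      simp
  rw [Finset.sum_congr rfl (fun V _ => inner V)]
  have hps : (Finset.univ : Finset (Finset (Fin n))) = (Finset.univ : Finset (Fin n)).powerset :=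
    Finset.powerset_univ.symm
  rw [hps, Finset.sum_powerset_apply_card
    (fun k => (if k ≠ 0 then k ^ (k - 1) else 0) * (n - 1).descFactorial (n - k)),
    show (Finset.univ : Finset (Fin n)).card = n by simp]
  have hsub : Finset.Icc 1 n ⊆ Finset.range (n + 1) := by
    intro k hk
    rw [Finset.mem_Icc] at hk
    rw [Finset.mem_range]
    omega
  have hvan : ∀ k ∈ Finset.range (n + 1), k ∉ Finset.Icc 1 n →
      n.choose k • ((if k ≠ 0 then k ^ (k - 1) else 0) * (n - 1).descFactorial (n - k)) = 0 := by
    intro k hk hk2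
    have hk0 : k = 0 := by
      rw [Finset.mem_range] at hk
      rw [Finset.mem_Icc] at hk2
      omega
    subst hk0
    simp
  rw [← Finset.sum_subset hsub hvan]
  apply Finset.sum_congr rfl
  intro k hk
  rw [Finset.mem_Icc] at hk
  rw [if_pos (by omega : k ≠ 0), smul_eq_mul, ← mul_assoc]
  congr 1
  rw [Nat.descFactorial_eq_div (by omega : n - k ≤ n - 1)]
  have : n - 1 - (n - k) = k - 1 := by omega
  rw [this]
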